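/- (Warmup bound.) Let λ > 0, 0 < α ≤ 1, and let φ_{tk} ∈ ℝ^d for t ∈ {1,…,H}, k ∈ {1,…,K} with ‖φ_{tk}‖ ≤ L_φ for all t, k. For each t and k set Σ_{tk} := λ·I + Σ_{i=1}^{k−1} φ_{ti} φ_{ti}ᵀ. Then Σ_{k=1}^{K} Σ_{t=1}^{H} H·𝟙{‖φ_{tk}‖_{Σ_{tk}⁻¹} > α} ≤ (2·H²·d / α²) · log((λ + K·L_φ²)/λ). -/

import Mathlib

open Matrix Finset

lemma psd_vmv {d : ℕ} (v : Fin d → ℝ) : (Matrix.vecMulVec v v).PosSemidef := by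
  have h : Matrix.vecMulVec v v = (Matrix.replicateRow Unit v)ᴴ * Matrix.replicateRow Unit v := by
    ext i j
    simp [Matrix.vecMulVec_apply, Matrix.mul_apply, Matrix.conjTranspose_apply, mul_comm]
  rw [h]
  exact Matrix.posSemidef_conjTranspose_mul_self _

lemma det_step {d : ℕ} (A : Matrix (Fin d) (Fin d) ℝ) (hA : A.PosDef) (u : Fin d → ℝ) :
    (A + Matrix.vecMulVec u u).det = A.det * (1 + u ⬝ᵥ (A⁻¹ *ᵥ u)) := by
  have hdet : IsUnit A.det := (isUnit_iff_ne_zero).2 (ne_of_gt hA.det_pos)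
  rw [Matrix.vecMulVec_eq Unit, Matrix.det_add_replicateCol_mul_replicateRow hdet]
  congr 1
  rw [Matrix.det_unique]
  simp [Matrix.mul_apply, dotProduct, Matrix.mulVec, Finset.mul_sum, Finset.sum_mul]
  rw [Finset.sum_comm]
  apply Finset.sum_congr rfl; intros; apply Finset.sum_congr rfl; intros; ring

lemma q_nonneg {d : ℕ} {A : Matrix (Fin d) (Fin d) ℝ} (hA : A.PosDef) (u : Fin d → ℝ) :
    0 ≤ u ⬝ᵥ (A⁻¹ *ᵥ u) := by
  have := hA.inv.posSemidef.dotProduct_mulVec_nonneg u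
  simpa using this

lemma indicator_le {α q c : ℝ} (hα0 : 0 < α) (hα1 : α ≤ 1) (hq : 0 ≤ q) (hc : 0 ≤ c) :
    (if α < Real.sqrt q then c else 0) ≤ (2 * c / α ^ 2) * Real.log (1 + q) := by
  have hlog0 : 0 ≤ Real.log (1 + q) := Real.log_nonneg (by linarith)
  split_ifs with h
  · have hq2 : α ^ 2 < q := by
      have := Real.sq_sqrt hq
      nlinarith [Real.sqrt_nonneg q]
    have h1 : (1 : ℝ) - (1 + α ^ 2)⁻¹ ≤ Real.log (1 + α ^ 2) :=
      Real.one_sub_inv_le_log_of_pos (by positivity)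
    have h2 : Real.log (1 + α ^ 2) ≤ Real.log (1 + q) :=
      Real.log_le_log (by positivity) (by linarith)
    have h3 : α ^ 2 / 2 ≤ 1 - (1 + α ^ 2)⁻¹ := by
      have h5 : (1 + α ^ 2)⁻¹ * (1 + α ^ 2) = 1 := by
        field_simp
      have hge : (2:ℝ)⁻¹ ≤ (1 + α ^ 2)⁻¹ := by
        apply inv_anti₀ (by positivity)
        nlinarith
      have h6 : 0 ≤ ((1 + α ^ 2)⁻¹ - 2⁻¹) * α ^ 2 :=
        mul_nonneg (by linarith) (sq_nonneg α)
      nlinarith [h5, h6]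
    have h4 : α ^ 2 / 2 ≤ Real.log (1 + q) := by linarith
    rw [div_mul_eq_mul_div, le_div_iff₀ (by positivity)]
    nlinarith
  · positivity
lemma smul_one_posdef {d : ℕ} {lam : ℝ} (hlam : 0 < lam) :
    (lam • (1 : Matrix (Fin d) (Fin d) ℝ)).PosDef := by
  rw [Matrix.smul_one_eq_diagonal]
  exact Matrix.PosDef.diagonal (fun _ => hlam)

lemma sig_posdef {d : ℕ} {lam : ℝ} (hlam : 0 < lam) (s : Finset ℕ) (ψ : ℕ → Fin d → ℝ) :
    (lam • (1 : Matrix (Fin d) (Fin d) ℝ) + ∑ i ∈ s, Matrix.vecMulVec (ψ i) (ψ i)).PosDef :=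
  (smul_one_posdef hlam).add_posSemidef (Finset.sum_induction _ _
    (fun _ _ ha hb => ha.add hb) (Matrix.PosSemidef.zero) (fun i _ => psd_vmv (ψ i)))

lemma sum_mulVec' {d : ℕ} (s : Finset ℕ) (A : ℕ → Matrix (Fin d) (Fin d) ℝ) (v : Fin d → ℝ) :
    (∑ i ∈ s, A i) *ᵥ v = ∑ i ∈ s, (A i *ᵥ v) := by
  ext j
  simp [Matrix.mulVec, dotProduct, Matrix.sum_apply, Finset.sum_mul]
  rw [Finset.sum_comm]

lemma vmv_mulVec {d : ℕ} (a v : Fin d → ℝ) :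
    Matrix.vecMulVec a a *ᵥ v = (a ⬝ᵥ v) • a := by
  ext j
  simp [Matrix.vecMulVec_apply, Matrix.mulVec, dotProduct, Finset.mul_sum,
    mul_comm, mul_assoc, mul_left_comm]

lemma dotProduct_sum' {d : ℕ} (s : Finset ℕ) (v : Fin d → ℝ) (w : ℕ → Fin d → ℝ) :
    v ⬝ᵥ (∑ i ∈ s, w i) = ∑ i ∈ s, v ⬝ᵥ w i := by
  simp only [dotProduct, Finset.sum_apply, Finset.mul_sum]
  rw [Finset.sum_comm]

lemma det_bound {d : ℕ} {lam B : ℝ} (hlam : 0 < lam) (ψ : ℕ → Fin d → ℝ) (s : Finset ℕ)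
    (hψ : ∀ i ∈ s, ψ i ⬝ᵥ ψ i ≤ B) :
    (lam • (1 : Matrix (Fin d) (Fin d) ℝ) + ∑ i ∈ s, Matrix.vecMulVec (ψ i) (ψ i)).det
      ≤ (lam + s.card * B) ^ d := by
  set M := lam • (1 : Matrix (Fin d) (Fin d) ℝ) + ∑ i ∈ s, Matrix.vecMulVec (ψ i) (ψ i) with hM
  have hPD : M.PosDef := sig_posdef hlam s ψ
  have hH : M.IsHermitian := hPD.1
  have heig : ∀ i, hH.eigenvalues i ≤ lam + s.card * B := by
    intro i
    set v : Fin d → ℝ := ⇑(hH.eigenvectorBasis i) with hvdef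
    have hv1 : v ⬝ᵥ v = 1 := by
      have h := hH.eigenvectorBasis.orthonormal.1 i
      have h2 : @inner ℝ _ _ (hH.eigenvectorBasis i) (hH.eigenvectorBasis i) = (1:ℝ) := by
        rw [real_inner_self_eq_norm_sq, h]; norm_num
      rw [EuclideanSpace.inner_eq_star_dotProduct] at h2
      simpa using h2
    rw [hH.eigenvalues_eq]
    have hexp : star v ⬝ᵥ (M *ᵥ v) = lam + ∑ j ∈ s, (ψ j ⬝ᵥ v) ^ 2 := by
      rw [hM, Matrix.add_mulVec, sum_mulVec', Matrix.smul_mulVec, Matrix.one_mulVec]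
      rw [dotProduct_add, dotProduct_smul, dotProduct_sum']
      simp only [star_trivial]
      rw [hv1]
      congr 1
      · simp
      · apply Finset.sum_congr rfl
        intro j hj
        rw [vmv_mulVec, dotProduct_smul, dotProduct_comm]
        rw [sq]
        simp [smul_eq_mul]
    simp only [star_trivial] at hexp
    have hgoal2 : star v ⬝ᵥ (M *ᵥ v) ≤ lam + s.card * B := by
      rw [star_trivial, hexp]
      refine ?_
      have hsum : ∑ j ∈ s, (ψ j ⬝ᵥ v) ^ 2 ≤ ∑ _j ∈ s, B := by
        apply Finset.sum_le_sum
        intro j hj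
        have hcs := Finset.sum_mul_sq_le_sq_mul_sq Finset.univ (ψ j) v
        have h1 : (ψ j ⬝ᵥ v) ^ 2 ≤ (ψ j ⬝ᵥ ψ j) * (v ⬝ᵥ v) := by
          simpa [dotProduct, sq] using hcs
        rw [hv1, mul_one] at h1
        exact le_trans h1 (hψ j hj)
      rw [Finset.sum_const, nsmul_eq_mul] at hsum
      linarith
    exact hgoal2
  have hdet : M.det = ∏ i, hH.eigenvalues i := by
    rw [hH.det_eq_prod_eigenvalues]; norm_num
  rw [hdet]
  calc ∏ i, hH.eigenvalues i ≤ ∏ _i : Fin d, (lam + s.card * B) := by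
        apply Finset.prod_le_prod
        · intro i _; exact hPD.posSemidef.eigenvalues_nonneg i
        · intro i _; exact heig i
    _ = (lam + s.card * B) ^ d := by simp

lemma telescope {d : ℕ} {lam : ℝ} (hlam : 0 < lam) (ψ : ℕ → Fin d → ℝ)
    (S : ℕ → Matrix (Fin d) (Fin d) ℝ)
    (hS : ∀ k, S k = lam • (1 : Matrix (Fin d) (Fin d) ℝ) +
      ∑ i ∈ Finset.Icc 1 (k - 1), Matrix.vecMulVec (ψ i) (ψ i)) :
    ∀ n : ℕ, Real.log ((S (n + 1)).det)
      = d * Real.log lam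
        + ∑ k ∈ Finset.Icc 1 n, Real.log (1 + ψ k ⬝ᵥ ((S k)⁻¹ *ᵥ ψ k)) := by
  have hPD : ∀ k, (S k).PosDef := fun k => by rw [hS k]; exact sig_posdef hlam _ _
  intro n
  induction n with
  | zero =>
    rw [hS 1]
    rw [show (1 : ℕ) - 1 = 0 from rfl, show Finset.Icc 1 0 = (∅ : Finset ℕ) by simp]
    simp only [Finset.sum_empty, add_zero]
    rw [Matrix.smul_one_eq_diagonal, Matrix.det_diagonal]
    simp [Real.log_pow]
  | succ n ih =>
    have hstep : S (n + 1 + 1) = S (n + 1) + Matrix.vecMulVec (ψ (n + 1)) (ψ (n + 1)) := by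
      rw [hS (n + 1 + 1), hS (n + 1)]
      simp only [Nat.add_sub_cancel]
      rw [← Finset.insert_Icc_right_eq_Icc_add_one (show 1 ≤ n + 1 by omega), Finset.sum_insert (by simp)]
      abel
    rw [hstep, det_step _ (hPD (n + 1)) _,
      Real.log_mul (ne_of_gt (hPD (n + 1)).det_pos)
        (by have := q_nonneg (hPD (n + 1)) (ψ (n + 1)); positivity), ih]
    rw [← Finset.insert_Icc_right_eq_Icc_add_one (show 1 ≤ n + 1 by omega), Finset.sum_insert (by simp)]
    ring

/-- Warmup bound.
With `Σ_{tk} = λ I + ∑_{i=1}^{k-1} φ_{ti} φ_{ti}ᵀ`, `λ > 0`, `0 < α ≤ 1`, and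
`‖φ_{tk}‖ ≤ L_φ`, the total default penalty is bounded:
`∑_{k=1}^{K} ∑_{t=1}^{H} H·𝟙{‖φ_{tk}‖_{Σ_{tk}⁻¹} > α} ≤ (2 H² d / α²) log((λ + K L_φ²)/λ)`. -/
theorem warmup_bound
    (d H K : ℕ) (lam : ℝ) (hlam : 0 < lam)
    (α : ℝ) (hα0 : 0 < α) (hα1 : α ≤ 1) (Lφ : ℝ)
    (φ : ℕ → ℕ → (Fin d → ℝ))
    (hφ : ∀ t ∈ Finset.Icc 1 H, ∀ k ∈ Finset.Icc 1 K,
      Real.sqrt (φ t k ⬝ᵥ φ t k) ≤ Lφ)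
    (Sig : ℕ → ℕ → Matrix (Fin d) (Fin d) ℝ)
    (hSig : ∀ t k, Sig t k = lam • (1 : Matrix (Fin d) (Fin d) ℝ) +
      ∑ i ∈ Finset.Icc 1 (k - 1), Matrix.vecMulVec (φ t i) (φ t i)) :
    ∑ k ∈ Finset.Icc 1 K, ∑ t ∈ Finset.Icc 1 H,
      (if α < Real.sqrt (φ t k ⬝ᵥ ((Sig t k)⁻¹ *ᵥ φ t k)) then (H : ℝ) else 0) ≤
      (2 * H ^ 2 * d / α ^ 2) * Real.log ((lam + K * Lφ ^ 2) / lam) := by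
  have hPD : ∀ t k, (Sig t k).PosDef := fun t k => by
    rw [hSig t k]; exact sig_posdef hlam _ _
  have hpos : (0:ℝ) < lam + K * Lφ ^ 2 := by positivity
  have key : ∀ t ∈ Finset.Icc 1 H,
      ∑ k ∈ Finset.Icc 1 K,
        (if α < Real.sqrt (φ t k ⬝ᵥ ((Sig t k)⁻¹ *ᵥ φ t k)) then (H : ℝ) else 0)
      ≤ (2 * H / α ^ 2) * (d * Real.log ((lam + K * Lφ ^ 2) / lam)) := by
    intro t ht
    have htel := telescope hlam (φ t) (Sig t) (hSig t) K
    calc ∑ k ∈ Finset.Icc 1 K,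
          (if α < Real.sqrt (φ t k ⬝ᵥ ((Sig t k)⁻¹ *ᵥ φ t k)) then (H : ℝ) else 0)
        ≤ ∑ k ∈ Finset.Icc 1 K,
            (2 * H / α ^ 2) * Real.log (1 + φ t k ⬝ᵥ ((Sig t k)⁻¹ *ᵥ φ t k)) := by
          apply Finset.sum_le_sum
          intro k hk
          exact indicator_le hα0 hα1 (q_nonneg (hPD t k) _) (Nat.cast_nonneg H)
      _ = (2 * H / α ^ 2) * (Real.log ((Sig t (K + 1)).det) - d * Real.log lam) := by
          rw [← Finset.mul_sum, htel]; ring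
      _ ≤ (2 * H / α ^ 2) * (d * Real.log ((lam + K * Lφ ^ 2) / lam)) := by
          apply mul_le_mul_of_nonneg_left _ (by positivity)
          have hdb : (Sig t (K + 1)).det ≤ (lam + K * Lφ ^ 2) ^ d := by
            rw [hSig t (K + 1)]
            simp only [Nat.add_sub_cancel]
            have hψ : ∀ i ∈ Finset.Icc 1 K, φ t i ⬝ᵥ φ t i ≤ Lφ ^ 2 := by
              intro i hi
              have h1 := hφ t ht i hi
              have h2 : 0 ≤ φ t i ⬝ᵥ φ t i := by
                apply Finset.sum_nonneg; intro x _; exact mul_self_nonneg _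
              nlinarith [Real.sq_sqrt h2, Real.sqrt_nonneg (φ t i ⬝ᵥ φ t i)]
            have := det_bound hlam (φ t) (Finset.Icc 1 K) hψ
            rwa [Nat.card_Icc, Nat.add_sub_cancel] at this
          have hlog := Real.log_le_log (hPD t (K + 1)).det_pos hdb
          rw [Real.log_pow] at hlog
          rw [Real.log_div (ne_of_gt hpos) (ne_of_gt hlam)]
          have hd0 : (0:ℝ) ≤ d := Nat.cast_nonneg d
          nlinarith [hlog]
  rw [Finset.sum_comm]
  calc ∑ t ∈ Finset.Icc 1 H, ∑ k ∈ Finset.Icc 1 K,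
        (if α < Real.sqrt (φ t k ⬝ᵥ ((Sig t k)⁻¹ *ᵥ φ t k)) then (H : ℝ) else 0)
      ≤ ∑ _t ∈ Finset.Icc 1 H, (2 * H / α ^ 2) * (d * Real.log ((lam + K * Lφ ^ 2) / lam)) :=
        Finset.sum_le_sum key
    _ = (H : ℝ) * ((2 * H / α ^ 2) * (d * Real.log ((lam + K * Lφ ^ 2) / lam))) := by
        rw [Finset.sum_const, Nat.card_Icc, Nat.add_sub_cancel, nsmul_eq_mul]
    _ = (2 * H ^ 2 * d / α ^ 2) * Real.log ((lam + K * Lφ ^ 2) / lam) := by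
        field_simp
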